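/- Let y₀ < 0, κ > 0, and suppose s ∈ [0, s*) with -s - y₀ = C ε^{2α} for some constants C > 0 and 0 ≤ α < 1/3. Define φ(r) = (2κ/3)[(-s - y₀)^{3/2} - (-r - y₀)^{3/2}] for r ∈ [0,s]. Then φ'(r) > 0 on [0,s], φ(s) = 0, and ∫₀^s e^{φ(r)/ε} dr ~ ε/(κ(-s - y₀)^{1/2}) = Θ(ε^{1-α}) as ε → 0⁺. -/

import Mathlib

open Filter Topology Asymptotics intervalIntegral

lemma aux_rpow_th {x : ℝ} (hx : 0 ≤ x) : x ^ ((3:ℝ)/2) = x * Real.sqrt x := by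
  rw [Real.sqrt_eq_rpow]
  rw [show ((3:ℝ)/2) = 1 + 1/2 by norm_num, Real.rpow_add' hx (by norm_num), Real.rpow_one]

lemma aux_bounds {a b : ℝ} (ha : 0 < a) (hab : a ≤ b) :
    (3/2) * Real.sqrt a * (b-a) ≤ b^((3:ℝ)/2) - a^((3:ℝ)/2) ∧
    b^((3:ℝ)/2) - a^((3:ℝ)/2) ≤ (3/2) * Real.sqrt b * (b-a) := by
  have hb : (0:ℝ) ≤ b := le_trans ha.le hab
  rw [aux_rpow_th ha.le, aux_rpow_th hb]
  have h1 : Real.sqrt a ^ 2 = a := Real.sq_sqrt ha.le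
  have h2 : Real.sqrt b ^ 2 = b := Real.sq_sqrt hb
  have h3 : Real.sqrt a ≤ Real.sqrt b := Real.sqrt_le_sqrt hab
  have h4 : 0 < Real.sqrt a := Real.sqrt_pos.2 ha
  constructor <;> nlinarith [sq_nonneg (Real.sqrt b - Real.sqrt a), sq_nonneg (Real.sqrt b + Real.sqrt a)]

lemma aux_int_exp (c d p q : ℝ) (hc : 0 < c) :
    ∫ r in p..q, Real.exp (c*r+d) = (Real.exp (c*q+d) - Real.exp (c*p+d))/c := by
  have h : ∀ x ∈ Set.uIcc p q, HasDerivAt (fun r => Real.exp (c*r+d) / c) (Real.exp (c*x+d)) x := by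
    intro x _
    have h0 : HasDerivAt (fun r : ℝ => c*r+d) c x := by
      simpa using ((hasDerivAt_id x).const_mul c).add_const d
    have := (h0.exp).div_const c
    simpa [mul_div_assoc, div_self hc.ne'] using this
  rw [intervalIntegral.integral_eq_sub_of_hasDerivAt h]
  · ring
  · exact (Real.continuous_exp.comp (by continuity)).intervalIntegrable p q

set_option maxHeartbeats 1600000 in
lemma aux_key (y₀ κ C α : ℝ)
    (hy₀ : y₀ < 0) (hκ : 0 < κ) (hC : 0 < C) (hα₀ : 0 ≤ α) (hα : α < 1 / 3)
    (sfun : ℝ → ℝ) (hs : ∀ ε, sfun ε = -y₀ - C * ε ^ (2 * α))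
    (hspos : ∀ᶠ ε in nhdsWithin 0 (Set.Ioi 0), 0 < sfun ε)
    (φ : ℝ → ℝ → ℝ)
    (hφ : ∀ ε r, φ ε r = (2 * κ / 3) *
      ((-sfun ε - y₀) ^ ((3 : ℝ) / 2) - (-r - y₀) ^ ((3 : ℝ) / 2)))
    (δ : ℝ) (hδ0 : 0 < δ) (hδ1 : δ < 1) :
    ∀ᶠ ε in nhdsWithin 0 (Set.Ioi 0),
      (1-δ) * (ε / (κ * Real.sqrt (-sfun ε - y₀)))
        ≤ (∫ r in (0:ℝ)..(sfun ε), Real.exp (φ ε r / ε)) ∧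
      (∫ r in (0:ℝ)..(sfun ε), Real.exp (φ ε r / ε))
        ≤ ε / (κ * Real.sqrt (-sfun ε - y₀)) := by
  have hεpos : ∀ᶠ ε in nhdsWithin (0:ℝ) (Set.Ioi 0), 0 < ε := eventually_mem_nhdsWithin
  have hε1 : ∀ᶠ ε in nhdsWithin (0:ℝ) (Set.Ioi 0), ε < 1 :=
    (eventually_lt_nhds one_pos).filter_mono nhdsWithin_le_nhds
  -- lower bound c₀ on sfun
  obtain ⟨c₀, hc₀pos, hc₀⟩ : ∃ c₀ : ℝ, 0 < c₀ ∧ ∀ᶠ ε in nhdsWithin (0:ℝ) (Set.Ioi 0), c₀ ≤ sfun ε := by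
    rcases eq_or_lt_of_le hα₀ with h0 | h0
    · have hconst : ∀ ε : ℝ, sfun ε = -y₀ - C := by
        intro ε; rw [hs ε, ← h0]; norm_num
      obtain ⟨ε₀, hε₀⟩ := hspos.exists
      rw [hconst ε₀] at hε₀
      exact ⟨-y₀ - C, hε₀, Filter.Eventually.of_forall fun ε => (hconst ε).ge⟩
    · have h2α : 0 < 2 * α := by linarith
      have htend : Tendsto (fun ε : ℝ => C * ε ^ (2*α)) (nhdsWithin 0 (Set.Ioi 0)) (𝓝 0) := by
        have h1 : ContinuousAt (fun x : ℝ => x ^ (2*α)) 0 :=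
          Real.continuousAt_rpow_const 0 _ (Or.inr (by linarith))
        have h2 : Tendsto (fun ε : ℝ => ε ^ (2*α)) (nhdsWithin (0:ℝ) (Set.Ioi 0)) (𝓝 ((0:ℝ) ^ (2*α))) :=
          h1.tendsto.mono_left nhdsWithin_le_nhds
        simpa [Real.zero_rpow h2α.ne'] using h2.const_mul C
      have hev := htend.eventually_lt_const (show (0:ℝ) < -y₀/2 by linarith)
      refine ⟨-y₀/2, by linarith, ?_⟩
      filter_upwards [hev] with ε h
      rw [hs ε]; linarith
  set δ' : ℝ := min δ (c₀ / C) with hδ'def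
  have hδ'0 : 0 < δ' := lt_min hδ0 (by positivity)
  have hδ'δ : δ' ≤ δ := min_le_left _ _
  have hδ'c : δ' ≤ c₀ / C := min_le_right _ _
  clear_value δ'
  -- smallness of the error exponential
  have h3a : Tendsto (fun ε : ℝ => ε ^ (3*α - 1)) (nhdsWithin 0 (Set.Ioi 0)) atTop := by
    have h1 : Tendsto (fun ε : ℝ => (ε⁻¹) ^ (1 - 3*α)) (nhdsWithin (0:ℝ) (Set.Ioi 0)) atTop :=
      (tendsto_rpow_atTop (by linarith)).comp tendsto_inv_nhdsGT_zero
    refine h1.congr' ?_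
    filter_upwards [hεpos] with ε hε
    rw [Real.inv_rpow hε.le, ← Real.rpow_neg hε.le]
    congr 1; ring
  have hT : Tendsto (fun ε : ℝ => κ * δ' * (C * Real.sqrt C) * ε ^ (3*α - 1))
      (nhdsWithin 0 (Set.Ioi 0)) atTop := by
    apply Tendsto.const_mul_atTop (by positivity) h3a
  have hEtend : Tendsto (fun ε : ℝ => Real.exp (-(κ * δ' * (C * Real.sqrt C) * ε ^ (3*α - 1))))
      (nhdsWithin 0 (Set.Ioi 0)) (𝓝 0) :=
    Real.tendsto_exp_atBot.comp (tendsto_neg_atTop_atBot.comp hT)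
  have hEev := hEtend.eventually_le_const (show (0:ℝ) < δ/4 by linarith)
  -- main estimate
  filter_upwards [hεpos, hε1, hc₀, hEev, hspos] with ε hε hε1' hsc hE hs0
  set s : ℝ := sfun ε with hs_def
  have ha : (0:ℝ) < C * ε ^ (2*α) := by positivity
  set a : ℝ := C * ε ^ (2*α) with ha_def
  have hsa : -s - y₀ = a := by rw [hs_def, ha_def, hs ε]; ring
  clear_value s
  have hsqa : 0 < Real.sqrt a := Real.sqrt_pos.2 ha
  have hsqrtA : Real.sqrt a = Real.sqrt C * ε ^ α := by
    rw [ha_def, Real.sqrt_mul hC.le]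
    congr 1
    have h2 : ε ^ (2*α) = (ε ^ α)^2 := by
      rw [← Real.rpow_natCast (ε ^ α) 2, ← Real.rpow_mul hε.le]
      congr 1; push_cast; ring
    rw [h2, Real.sqrt_sq (Real.rpow_nonneg hε.le _)]
  clear_value a
  set c : ℝ := κ * Real.sqrt a / ε with hc_def
  have hc : 0 < c := by rw [hc_def]; positivity
  clear_value c
  have hcε : c * ε = κ * Real.sqrt a := by rw [hc_def, div_mul_cancel₀ _ hε.ne']
  have hI : IntervalIntegrable (fun r => Real.exp (φ ε r / ε)) MeasureTheory.volume 0 s := by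
    apply Continuous.intervalIntegrable
    apply Real.continuous_exp.comp
    apply Continuous.div_const
    have h1 : Continuous fun r : ℝ => (-r - y₀) ^ ((3:ℝ)/2) :=
      (Real.continuous_rpow_const (by norm_num)).comp (by continuity)
    have : Continuous fun r : ℝ => (2 * κ / 3) *
        ((-sfun ε - y₀) ^ ((3:ℝ)/2) - (-r - y₀) ^ ((3:ℝ)/2)) :=
      continuous_const.mul (continuous_const.sub h1)
    exact this.congr fun r => (hφ ε r).symm
  have hb : ∀ r : ℝ, -r - y₀ = a + (s - r) := by
    intro r; rw [← hsa]; ring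
  -- upper bound
  have hupper : (∫ r in (0:ℝ)..s, Real.exp (φ ε r / ε)) ≤ ε / (κ * Real.sqrt a) := by
    have hmono : (∫ r in (0:ℝ)..s, Real.exp (φ ε r / ε))
        ≤ ∫ r in (0:ℝ)..s, Real.exp (c * r + (-(c*s))) := by
      apply intervalIntegral.integral_mono_on hs0.le hI
        ((Real.continuous_exp.comp ((continuous_const.mul continuous_id).add
        continuous_const)).intervalIntegrable _ _)
      intro r hr
      show Real.exp (φ ε r / ε) ≤ Real.exp (c * r + -(c*s))
      apply Real.exp_le_exp.2
      rw [hφ ε r, ← hs_def, hsa, hb r]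
      have hba : a ≤ a + (s - r) := by linarith [hr.2]
      have h1 := (aux_bounds ha hba).1
      rw [div_le_iff₀ hε]
      have hR : (c*r + -(c*s))*ε = κ * Real.sqrt a * (r - s) := by rw [← hcε]; ring
      rw [hR]
      linarith [mul_le_mul_of_nonneg_left h1 hκ.le]
    have hval : (∫ r in (0:ℝ)..s, Real.exp (c * r + (-(c*s)))) = (1 - Real.exp (-(c*s)))/c := by
      rw [aux_int_exp _ _ _ _ hc]
      rw [show c*s + -(c*s) = 0 by ring, show c*0 + -(c*s) = -(c*s) by ring, Real.exp_zero]
    rw [hval] at hmono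
    have : (1 - Real.exp (-(c*s)))/c ≤ 1/c := by
      gcongr
      linarith [Real.exp_pos (-(c*s))]
    have hgc : 1/c = ε / (κ * Real.sqrt a) := by
      rw [hc_def]; field_simp
    linarith [hmono, this.trans_eq hgc]
  -- lower bound
  have haC : a ≤ C := by
    rw [ha_def]
    calc C * ε ^ (2*α) ≤ C * 1 := by
          gcongr
          exact Real.rpow_le_one hε.le hε1'.le (by linarith)
      _ = C := mul_one C
  set m : ℝ := δ' * a with hm_def
  have hm0 : 0 < m := by rw [hm_def]; positivity
  clear_value m
  have hms : m ≤ s := by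
    calc m ≤ (c₀/C) * a := hm_def ▸ mul_le_mul_of_nonneg_right hδ'c ha.le
      _ ≤ (c₀/C) * C := mul_le_mul_of_nonneg_left haC (by positivity)
      _ = c₀ := div_mul_cancel₀ _ hC.ne'
      _ ≤ s := hsc
  set lam : ℝ := c * Real.sqrt (1 + δ') with hlam_def
  clear_value lam
  have hsq1 : (1:ℝ) ≤ Real.sqrt (1 + δ') := by
    have := Real.sqrt_le_sqrt (show (1:ℝ) ≤ 1 + δ' by linarith)
    rwa [Real.sqrt_one] at this
  have hlam : 0 < lam := by
    rw [hlam_def]; exact mul_pos hc (Real.sqrt_pos.2 (by linarith))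
  have hsub : Set.uIcc (s-m) s ⊆ Set.uIcc 0 s := by
    rw [Set.uIcc_of_le (by linarith : s - m ≤ s), Set.uIcc_of_le hs0.le]
    exact Set.Icc_subset_Icc (by linarith) le_rfl
  have hlow1 : (∫ r in (s-m)..s, Real.exp (lam*r + (-(lam*s))))
      ≤ ∫ r in (s-m)..s, Real.exp (φ ε r / ε) := by
    apply intervalIntegral.integral_mono_on (by linarith)
      ((Real.continuous_exp.comp ((continuous_const.mul continuous_id).add
        continuous_const)).intervalIntegrable _ _)
      (hI.mono_set hsub)
    intro r hr
    show Real.exp (lam*r + -(lam*s)) ≤ Real.exp (φ ε r / ε)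
    apply Real.exp_le_exp.2
    rw [hφ ε r, ← hs_def, hsa, hb r]
    have hba : a ≤ a + (s - r) := by linarith [hr.2]
    have h2 := (aux_bounds ha hba).2
    have hbb : Real.sqrt (a + (s - r)) ≤ Real.sqrt a * Real.sqrt (1+δ') := by
      rw [← Real.sqrt_mul ha.le]
      apply Real.sqrt_le_sqrt
      have : s - r ≤ m := by linarith [hr.1]
      rw [hm_def] at this
      linarith
    rw [le_div_iff₀ hε]
    have hlamε : lam * ε = κ * Real.sqrt a * Real.sqrt (1+δ') := by
      rw [hlam_def, hc_def]; field_simp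
    have hsr : 0 ≤ s - r := by linarith [hr.2]
    have hR : (lam*r + -(lam*s))*ε = κ * Real.sqrt a * Real.sqrt (1+δ') * (r - s) := by
      rw [← hlamε]; ring
    rw [hR]
    have h3' := mul_le_mul_of_nonneg_right hbb hsr
    have h5 : (a+(s-r))^((3:ℝ)/2) - a^((3:ℝ)/2)
        ≤ (3/2) * (Real.sqrt a * Real.sqrt (1+δ') * (s-r)) := by linarith
    have h6 := mul_le_mul_of_nonneg_left h5 hκ.le
    linarith
  have hlow2 : (∫ r in (s-m)..s, Real.exp (lam*r + (-(lam*s))))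
      = (1 - Real.exp (-(lam*m)))/lam := by
    rw [aux_int_exp _ _ _ _ hlam]
    rw [show lam*s + -(lam*s) = 0 by ring, show lam*(s-m) + -(lam*s) = -(lam*m) by ring,
      Real.exp_zero]
  have hmono2 : (∫ r in (s-m)..s, Real.exp (φ ε r / ε))
      ≤ ∫ r in (0:ℝ)..s, Real.exp (φ ε r / ε) := by
    apply intervalIntegral.integral_mono_interval (by linarith) (by linarith) le_rfl
    · exact Filter.Eventually.of_forall fun x => (Real.exp_pos _).le
    · exact hI
  -- the exponential error term is small
  have hlamm : κ * δ' * (C * Real.sqrt C) * ε ^ (3*α - 1) ≤ lam * m := by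
    have hav : a * Real.sqrt a = C * Real.sqrt C * ε ^ (3*α) := by
      rw [hsqrtA, ha_def]
      rw [show C * ε ^ (2*α) * (Real.sqrt C * ε ^ α) = C * Real.sqrt C * (ε ^ (2*α) * ε ^ α) by ring]
      rw [← Real.rpow_add hε]
      congr 2; ring
    have h31 : ε ^ (3*α - 1) = ε ^ (3*α) / ε := by
      rw [Real.rpow_sub hε, Real.rpow_one]
    have hlm : lam * m = κ * δ' * (a * Real.sqrt a) * Real.sqrt (1+δ') / ε := by
      rw [hlam_def, hm_def, hc_def]; ring
    have hlm2 : lam * m = (κ*δ'*(C*Real.sqrt C)*ε^(3*α-1)) * Real.sqrt (1+δ') := by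
      rw [hlm, hav, h31]; ring
    rw [hlm2]
    exact le_mul_of_one_le_right (by positivity) hsq1
  have hEsmall : Real.exp (-(lam*m)) ≤ δ/4 := by
    refine le_trans (Real.exp_le_exp.2 (by linarith)) hE
  -- put the lower bound together
  have hsqd : Real.sqrt (1 + δ') ≤ 1 + δ'/2 := by
    rw [show (1:ℝ) + δ'/2 = Real.sqrt ((1 + δ'/2)^2) by rw [Real.sqrt_sq (by linarith)]]
    exact Real.sqrt_le_sqrt (by nlinarith)
  have hkey : (1 - δ) * Real.sqrt (1 + δ') ≤ 1 - Real.exp (-(lam*m)) := by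
    have hmul := mul_le_mul_of_nonneg_left hsqd (by linarith : (0:ℝ) ≤ 1 - δ)
    nlinarith [Real.exp_pos (-(lam*m)), hEsmall, hδ'δ, hδ'0]
  have hfinal : (1-δ) * (ε / (κ * Real.sqrt a)) ≤ (1 - Real.exp (-(lam*m)))/lam := by
    have hgc : ε / (κ * Real.sqrt a) = 1/c := by
      rw [hc_def]; field_simp
    rw [hgc, show (1-δ) * (1/c) = (1-δ)/c by ring, div_le_div_iff₀ hc hlam]
    calc (1-δ) * lam = c * ((1-δ) * Real.sqrt (1+δ')) := by rw [hlam_def]; ring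
      _ ≤ c * (1 - Real.exp (-(lam*m))) := mul_le_mul_of_nonneg_left hkey hc.le
      _ = (1 - Real.exp (-(lam*m))) * c := by ring
  constructor
  · rw [hsa]
    calc (1-δ) * (ε / (κ * Real.sqrt a)) ≤ (1 - Real.exp (-(lam*m)))/lam := hfinal
      _ = ∫ r in (s-m)..s, Real.exp (lam*r + (-(lam*s))) := hlow2.symm
      _ ≤ ∫ r in (s-m)..s, Real.exp (φ ε r / ε) := hlow1
      _ ≤ ∫ r in (0:ℝ)..s, Real.exp (φ ε r / ε) := hmono2
  · rw [hsa]; exact hupper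


/-- Endpoint Laplace asymptotics near a fold. Let `y₀ < 0`, `κ > 0` and let the endpoint
`s(ε) = -y₀ - Cε^{2α}` (so that `-s(ε) - y₀ = Cε^{2α}`) with `C > 0`, `0 ≤ α < 1/3`,
and `s(ε) > 0` for small `ε > 0`.  With
`φ_ε(r) = (2κ/3)[(-s(ε)-y₀)^{3/2} - (-r-y₀)^{3/2}]` one has `φ_ε'(r) > 0` on `[0, s(ε)]`,
`φ_ε(s(ε)) = 0`, and `∫₀^{s(ε)} e^{φ_ε(r)/ε} dr ~ ε/(κ√(-s(ε)-y₀)) = Θ(ε^{1-α})`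
as `ε → 0⁺`. -/
theorem fold_laplace_asymptotics (y₀ κ C α : ℝ)
    (hy₀ : y₀ < 0) (hκ : 0 < κ) (hC : 0 < C) (hα₀ : 0 ≤ α) (hα : α < 1 / 3)
    (sfun : ℝ → ℝ) (hs : ∀ ε, sfun ε = -y₀ - C * ε ^ (2 * α))
    (hspos : ∀ᶠ ε in nhdsWithin 0 (Set.Ioi 0), 0 < sfun ε)
    (φ : ℝ → ℝ → ℝ)
    (hφ : ∀ ε r, φ ε r = (2 * κ / 3) *
      ((-sfun ε - y₀) ^ ((3 : ℝ) / 2) - (-r - y₀) ^ ((3 : ℝ) / 2))) :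
    (∀ᶠ ε in nhdsWithin 0 (Set.Ioi 0),
      φ ε (sfun ε) = 0 ∧
      ∀ r ∈ Set.Icc 0 (sfun ε), 0 < deriv (φ ε) r) ∧
    (fun ε => ∫ r in (0 : ℝ)..(sfun ε), Real.exp (φ ε r / ε))
      ~[nhdsWithin 0 (Set.Ioi 0)]
      (fun ε => ε / (κ * Real.sqrt (-sfun ε - y₀))) ∧
    (∃ c₁ c₂ : ℝ, 0 < c₁ ∧ 0 < c₂ ∧
      ∀ᶠ ε in nhdsWithin 0 (Set.Ioi 0),
        c₁ * ε ^ (1 - α) ≤ (∫ r in (0 : ℝ)..(sfun ε), Real.exp (φ ε r / ε)) ∧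
        (∫ r in (0 : ℝ)..(sfun ε), Real.exp (φ ε r / ε)) ≤ c₂ * ε ^ (1 - α)) := by
  have hεpos : ∀ᶠ ε in nhdsWithin (0:ℝ) (Set.Ioi 0), 0 < ε := eventually_mem_nhdsWithin
  have hapos : ∀ᶠ ε in nhdsWithin (0:ℝ) (Set.Ioi 0), 0 < -sfun ε - y₀ ∧ -sfun ε - y₀ = C * ε ^ (2*α) := by
    filter_upwards [hεpos] with ε hε
    have h2 : -sfun ε - y₀ = C * ε ^ (2*α) := by rw [hs ε]; ring
    exact ⟨by rw [h2]; positivity, h2⟩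
  refine ⟨?_, ?_, ?_⟩
  · -- endpoint value and derivative positivity
    filter_upwards [hεpos, hspos, hapos] with ε hε hs0 ha
    refine ⟨by rw [hφ, sub_self, mul_zero], ?_⟩
    intro r hr
    have hpos : 0 < -r - y₀ := by
      have := ha.1; have := hr.2; linarith
    have hφfun : φ ε = fun r => (2 * κ / 3) *
        ((-sfun ε - y₀) ^ ((3:ℝ)/2) - (-r - y₀) ^ ((3:ℝ)/2)) := funext (hφ ε)
    have hd : HasDerivAt (fun x : ℝ => -x - y₀) (-1) r := by
      simpa using ((hasDerivAt_id r).neg.sub_const y₀)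
    have hd2 : HasDerivAt (fun x : ℝ => (-x - y₀) ^ ((3:ℝ)/2))
        ((-1) * ((3:ℝ)/2) * (-r - y₀) ^ ((3:ℝ)/2 - 1)) r :=
      hd.rpow_const (Or.inl hpos.ne')
    have hd3 : HasDerivAt (φ ε)
        ((2 * κ / 3) * (0 - (-1) * ((3:ℝ)/2) * (-r - y₀) ^ ((3:ℝ)/2 - 1))) r := by
      rw [hφfun]
      exact ((hasDerivAt_const r _).sub hd2).const_mul _
    rw [hd3.deriv]
    have hX := Real.rpow_pos_of_pos hpos ((3:ℝ)/2 - 1)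
    nlinarith [hX, hκ]
  · -- asymptotic equivalence
    have hgne : ∀ᶠ ε in nhdsWithin (0:ℝ) (Set.Ioi 0),
        (fun ε => ε / (κ * Real.sqrt (-sfun ε - y₀))) ε ≠ 0 := by
      filter_upwards [hεpos, hapos] with ε hε ha
      have : 0 < ε / (κ * Real.sqrt (-sfun ε - y₀)) :=
        div_pos hε (mul_pos hκ (Real.sqrt_pos.2 ha.1))
      exact this.ne'
    rw [Asymptotics.isEquivalent_iff_tendsto_one hgne]
    rw [Metric.tendsto_nhds]
    intro t ht
    have hδ0 : 0 < min (t/2) (1/2) := by positivity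
    have hδ1 : min (t/2) (1/2) < 1 := lt_of_le_of_lt (min_le_right _ _) (by norm_num)
    filter_upwards [aux_key y₀ κ C α hy₀ hκ hC hα₀ hα sfun hs hspos φ hφ _ hδ0 hδ1,
      hεpos, hapos] with ε hb hε ha
    have hg : 0 < ε / (κ * Real.sqrt (-sfun ε - y₀)) :=
      div_pos hε (mul_pos hκ (Real.sqrt_pos.2 ha.1))
    rw [Real.dist_eq]
    have h1 : (∫ r in (0:ℝ)..(sfun ε), Real.exp (φ ε r / ε)) /
        (ε / (κ * Real.sqrt (-sfun ε - y₀))) ≤ 1 := by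
      rw [div_le_one hg]; exact hb.2
    have h2 : 1 - min (t/2) (1/2) ≤ (∫ r in (0:ℝ)..(sfun ε), Real.exp (φ ε r / ε)) /
        (ε / (κ * Real.sqrt (-sfun ε - y₀))) := by
      rw [le_div_iff₀ hg]; exact hb.1
    have habs : |(∫ r in (0:ℝ)..(sfun ε), Real.exp (φ ε r / ε)) /
        (ε / (κ * Real.sqrt (-sfun ε - y₀))) - 1| ≤ min (t/2) (1/2) := by
      rw [abs_le]; constructor <;> linarith
    calc |(∫ r in (0:ℝ)..(sfun ε), Real.exp (φ ε r / ε)) /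
        (ε / (κ * Real.sqrt (-sfun ε - y₀))) - 1| ≤ min (t/2) (1/2) := habs
      _ ≤ t/2 := min_le_left _ _
      _ < t := by linarith
  · -- Θ(ε^{1-α}) bounds
    refine ⟨(1/(κ * Real.sqrt C))/2, 1/(κ * Real.sqrt C), by positivity, by positivity, ?_⟩
    have hgval : ∀ᶠ ε in nhdsWithin (0:ℝ) (Set.Ioi 0),
        ε / (κ * Real.sqrt (-sfun ε - y₀)) = (1/(κ * Real.sqrt C)) * ε ^ ((1:ℝ) - α) := by
      filter_upwards [hεpos, hapos] with ε hε ha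
      rw [ha.2]
      have hsq : Real.sqrt (C * ε ^ (2*α)) = Real.sqrt C * ε ^ α := by
        rw [Real.sqrt_mul hC.le]
        congr 1
        have h2 : ε ^ (2*α) = (ε ^ α)^2 := by
          rw [← Real.rpow_natCast (ε ^ α) 2, ← Real.rpow_mul hε.le]
          congr 1; push_cast; ring
        rw [h2, Real.sqrt_sq (Real.rpow_nonneg hε.le _)]
      rw [hsq]
      have h1α : ε ^ ((1:ℝ) - α) = ε / ε ^ α := by
        rw [Real.rpow_sub hε, Real.rpow_one]
      rw [h1α]
      rw [div_mul_div_comm, one_mul, mul_assoc]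
    filter_upwards [aux_key y₀ κ C α hy₀ hκ hC hα₀ hα sfun hs hspos φ hφ (1/2)
      (by norm_num) (by norm_num), hgval] with ε hb hg
    constructor
    · have := hb.1
      rw [hg] at this
      calc (1/(κ * Real.sqrt C))/2 * ε ^ ((1:ℝ) - α)
          = (1 - 1/2) * ((1/(κ * Real.sqrt C)) * ε ^ ((1:ℝ) - α)) := by ring
        _ ≤ _ := this
    · have := hb.2
      rw [hg] at this
      calc (∫ r in (0:ℝ)..(sfun ε), Real.exp (φ ε r / ε))
          ≤ (1/(κ * Real.sqrt C)) * ε ^ ((1:ℝ) - α) := this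
        _ = 1/(κ * Real.sqrt C) * ε ^ ((1:ℝ) - α) := by ring
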